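/- Let u, ū ∈ ℝ with u ≥ ū, and let a : ℝ → ℝ be C¹ such that a'(v) − a'(w) ≥ C (v−w)^β for all v ≥ w, where C > 0 and β ≥ 1. Let A be an antiderivative of a. Then (u − ū)(a(u) + a(ū)) − 2(A(u) − A(ū)) ≥ C' |u − ū|^{β+2} with C' = C/((β+1)(β+2)). -/

import Mathlib

open Real

theorem coercivity_monotone_flux
    (u ub C β : ℝ) (hu : ub ≤ u) (hC : 0 < C) (hβ : 1 ≤ β)
    (a A : ℝ → ℝ) (ha : ContDiff ℝ 1 a)
    (hA : ∀ x, HasDerivAt A (a x) x)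
    (hmono : ∀ v w : ℝ, w ≤ v → C * (v - w) ^ β ≤ deriv a v - deriv a w) :
    (C / ((β + 1) * (β + 2))) * |u - ub| ^ (β + 2)
      ≤ (u - ub) * (a u + a ub) - 2 * (A u - A ub) := by
  have hadiff : Differentiable ℝ a := ha.differentiable one_ne_zero
  have hacont : Continuous (deriv a) := ha.continuous_deriv le_rfl
  have hβ1 : (0:ℝ) < β + 1 := by linarith
  have hβ2 : (0:ℝ) < β + 2 := by linarith
  set c : ℝ := C / ((β + 1) * (β + 2)) with hc
  -- key pointwise bound
  have key : ∀ x, ub ≤ x → C / (β + 1) * (x - ub) ^ (β + 1)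
      ≤ (x - ub) * deriv a x - (a x - a ub) := by
    intro x hx
    have hInt : a x - a ub = ∫ w in ub..x, deriv a w := by
      rw [intervalIntegral.integral_deriv_eq_sub (fun y _ => hadiff y)
        (hacont.intervalIntegrable ub x)]
    have hconst : (x - ub) * deriv a x = ∫ w in ub..x, deriv a x := by
      simp [mul_comm]
    have hcont2 : Continuous (fun w => C * (x - w) ^ β) := by
      apply continuous_const.mul
      exact (continuous_const.sub continuous_id).rpow_const
        (fun w => Or.inr (by linarith))
    have hineq : (∫ w in ub..x, C * (x - w) ^ β)
        ≤ ∫ w in ub..x, (deriv a x - deriv a w) := by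
      apply intervalIntegral.integral_mono_on hx
      · exact hcont2.intervalIntegrable ub x
      · exact (continuous_const.sub hacont).intervalIntegrable ub x
      · intro w hw
        exact hmono x w hw.2
    have hval : (∫ w in ub..x, C * (x - w) ^ β)
        = C / (β + 1) * (x - ub) ^ (β + 1) := by
      rw [intervalIntegral.integral_const_mul]
      have h1 : (∫ w in ub..x, (x - w) ^ β) = ∫ t in (x - x)..(x - ub), t ^ β :=
        intervalIntegral.integral_comp_sub_left (fun t => t ^ β) x
      rw [h1, sub_self]
      rw [integral_rpow (Or.inl (by linarith : (-1:ℝ) < β))]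
      rw [Real.zero_rpow (ne_of_gt hβ1)]
      ring
    calc C / (β + 1) * (x - ub) ^ (β + 1)
        = ∫ w in ub..x, C * (x - w) ^ β := hval.symm
      _ ≤ ∫ w in ub..x, (deriv a x - deriv a w) := hineq
      _ = (x - ub) * deriv a x - (a x - a ub) := by
          rw [intervalIntegral.integral_sub
            ((continuous_const).intervalIntegrable ub x)
            (hacont.intervalIntegrable ub x), ← hconst, ← hInt]
  -- define G and show it has the right derivative
  set G : ℝ → ℝ := fun x =>
    (x - ub) * (a x + a ub) - 2 * (A x - A ub) - c * (x - ub) ^ (β + 2) with hG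
  have hDeriv : ∀ x, HasDerivAt G
      ((x - ub) * deriv a x - (a x - a ub)
        - c * (β + 2) * (x - ub) ^ (β + 1)) x := by
    intro x
    have h1 : HasDerivAt (fun y => (y - ub) * (a y + a ub))
        (1 * (a x + a ub) + (x - ub) * deriv a x) x := by
      exact ((hasDerivAt_id x).sub_const ub).mul
        (((hadiff x).hasDerivAt).add_const (a ub))
    have h2 : HasDerivAt (fun y => 2 * (A y - A ub)) (2 * a x) x :=
      ((hA x).sub_const (A ub)).const_mul 2
    have h3 : HasDerivAt (fun y => c * (y - ub) ^ (β + 2))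
        (c * ((β + 2) * (x - ub) ^ (β + 1))) x := by
      have hb : HasDerivAt (fun y : ℝ => y ^ (β + 2))
          ((β + 2) * (x - ub) ^ (β + 2 - 1)) (x - ub) :=
        Real.hasDerivAt_rpow_const (Or.inr (by linarith))
      have hcomp := (hb.comp x ((hasDerivAt_id x).sub_const ub))
      simp only [mul_one] at hcomp
      have : β + 2 - 1 = β + 1 := by ring
      rw [this] at hcomp
      exact hcomp.const_mul c
    have := (h1.sub h2).sub h3
    refine HasDerivAt.congr_deriv this ?_
    ring
  have hGmono : MonotoneOn G (Set.Icc ub u) := by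
    apply monotoneOn_of_deriv_nonneg (convex_Icc ub u)
    · exact Continuous.continuousOn (by
        have : Continuous G := by
          apply Continuous.sub
          apply Continuous.sub
          · exact (continuous_id.sub continuous_const).mul
              (hadiff.continuous.add continuous_const)
          · exact continuous_const.mul
              ((continuous_iff_continuousAt.mpr (fun x => (hA x).continuousAt)).sub continuous_const)
          · exact continuous_const.mul
              ((continuous_id.sub continuous_const).rpow_const
                (fun w => Or.inr (by linarith)))
        exact this)
    · intro x _
      exact (hDeriv x).differentiableAt.differentiableWithinAt
    · intro x hx
      rw [interior_Icc] at hx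
      rw [(hDeriv x).deriv]
      have hk := key x (le_of_lt hx.1)
      have hceq : c * (β + 2) = C / (β + 1) := by
        rw [hc]
        field_simp
      rw [hceq]
      linarith
  have hGub : G ub = 0 := by
    simp [hG, Real.zero_rpow (ne_of_gt hβ2)]
  have hGu : G ub ≤ G u := hGmono (Set.left_mem_Icc.mpr hu)
    (Set.mem_Icc.mpr ⟨hu, le_refl u⟩) hu
  rw [hGub] at hGu
  have habs : |u - ub| = u - ub := abs_of_nonneg (by linarith)
  rw [habs]
  simp only [hG] at hGu
  linarith
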